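/- Let c₁,…,c_s be distinct real numbers, let u₁,…,u_s : ℝ → ℝ be differentiable, let t₀ ∈ ℝ and h ≠ 0 be such that the matrix E(t₀,h) is nonsingular, and let y₀, y₀', y₁, …, y_s ∈ ℝ be given. Then there exist (unique) real coefficients α₀, a₀, a₁, …, a_s such that the function φ(t) = α₀ + a₀·t + Σ_{k=1}^s a_k·u_k(t) satisfies φ(t₀) = y₀, φ'(t₀) = y₀', and φ(t₀ + c_i h) = y_i for i = 1,…,s. -/

import Mathlib

open Matrix BigOperators

private lemma sum_expand' (n : ℕ) (A B C a : Fin n → ℝ) (r : ℝ) :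
    ∑ k, (A k - B k - r * C k) * a k
      = (∑ k, a k * A k) - (∑ k, a k * B k) - r * ∑ k, a k * C k := by
  rw [Finset.mul_sum, ← Finset.sum_sub_distrib, ← Finset.sum_sub_distrib]
  exact Finset.sum_congr rfl fun k _ => by ring

private lemma deriv_phi (s : ℕ) (u : Fin s → ℝ → ℝ) (hu : ∀ k, Differentiable ℝ (u k))
    (α a : ℝ) (v : Fin s → ℝ) (x : ℝ) :
    deriv (fun t => α + a * t + ∑ k, v k * u k t) x
      = a + ∑ k, v k * deriv (u k) x := by
  have h1 : HasDerivAt (fun t : ℝ => α + a * t) a x := by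
    simpa using ((hasDerivAt_id x).const_mul a).const_add α
  have h2 : HasDerivAt (fun t => ∑ k, v k * u k t) (∑ k, v k * deriv (u k) x) x :=
    HasDerivAt.fun_sum fun k _ => ((hu k x).hasDerivAt).const_mul (v k)
  exact (h1.add h2).deriv

theorem stmt_1 (s : ℕ) (c : Fin s → ℝ) (hc : Function.Injective c)
    (u : Fin s → ℝ → ℝ) (hu : ∀ k, Differentiable ℝ (u k))
    (t₀ h : ℝ) (hh : h ≠ 0)
    (hE : IsUnit (Matrix.of fun i k : Fin s =>
      u k (t₀ + c i * h) - u k t₀ - c i * h * deriv (u k) t₀).det)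
    (y₀ y₀' : ℝ) (y : Fin s → ℝ) :
    ∃! p : ℝ × ℝ × (Fin s → ℝ),
      (fun x => p.1 + p.2.1 * x + ∑ k, p.2.2 k * u k x) t₀ = y₀ ∧
      deriv (fun x => p.1 + p.2.1 * x + ∑ k, p.2.2 k * u k x) t₀ = y₀' ∧
      ∀ i, (fun x => p.1 + p.2.1 * x + ∑ k, p.2.2 k * u k x) (t₀ + c i * h) = y i := by
  set E : Matrix (Fin s) (Fin s) ℝ := Matrix.of fun i k : Fin s =>
      u k (t₀ + c i * h) - u k t₀ - c i * h * deriv (u k) t₀ with hEdef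
  set b : Fin s → ℝ := fun i => y i - y₀ - c i * h * y₀' with hbdef
  have key : ∀ (i : Fin s) (v : Fin s → ℝ), (E *ᵥ v) i
      = (∑ k, v k * u k (t₀ + c i * h)) - (∑ k, v k * u k t₀)
        - c i * h * ∑ k, v k * deriv (u k) t₀ := by
    intro i v
    have : (E *ᵥ v) i
        = ∑ k, (u k (t₀ + c i * h) - u k t₀ - c i * h * deriv (u k) t₀) * v k := by
      simp [hEdef, Matrix.mulVec, dotProduct]
    rw [this, sum_expand']
  obtain ⟨a, ha, hauniq⟩ : ∃! a : Fin s → ℝ, E *ᵥ a = b := by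
    refine ⟨E⁻¹ *ᵥ b, ?_, fun v hv => ?_⟩
    · show E *ᵥ (E⁻¹ *ᵥ b) = b
      rw [Matrix.mulVec_mulVec, Matrix.mul_nonsing_inv _ hE, Matrix.one_mulVec]
    · calc v = E⁻¹ *ᵥ (E *ᵥ v) := by
            rw [Matrix.mulVec_mulVec, Matrix.nonsing_inv_mul _ hE, Matrix.one_mulVec]
      _ = E⁻¹ *ᵥ b := by rw [hv]
  have hka : ∀ i : Fin s, (∑ k, a k * u k (t₀ + c i * h)) - (∑ k, a k * u k t₀)
      - c i * h * ∑ k, a k * deriv (u k) t₀ = y i - y₀ - c i * h * y₀' := by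
    intro i
    rw [← key i a, ha]
  refine ⟨⟨y₀ - (y₀' - ∑ k, a k * deriv (u k) t₀) * t₀ - ∑ k, a k * u k t₀,
      y₀' - ∑ k, a k * deriv (u k) t₀, a⟩, ⟨?_, ?_, ?_⟩, ?_⟩
  · show _ + _ * t₀ + ∑ k, a k * u k t₀ = y₀
    ring
  · rw [deriv_phi s u hu]
    ring
  · intro i
    show _ + _ * (t₀ + c i * h) + ∑ k, a k * u k (t₀ + c i * h) = y i
    linear_combination hka i
  · rintro ⟨β, b₀, v⟩ ⟨h1, h2, h3⟩
    simp only at h1 h3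
    rw [deriv_phi s u hu] at h2
    have hv : v = a := by
      refine hauniq v (funext fun i => ?_)
      rw [key i v, hbdef]
      linear_combination h3 i - h1 - c i * h * h2
    subst hv
    have hb₀ : b₀ = y₀' - ∑ k, v k * deriv (u k) t₀ := by linear_combination h2
    subst hb₀
    have hβ : β = y₀ - (y₀' - ∑ k, v k * deriv (u k) t₀) * t₀ - ∑ k, v k * u k t₀ := by
      linear_combination h1
    subst hβ
    rfl
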